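/- Let μ > 0 and f ∈ C²([0,1]). Then, for every x ∈ [0,1], lim_{n → +∞} n [𝓛ₙᴷ(f, x) − f(x)] = ln_μ(x) [ f_μ'(x) (1/2 + (x − x²)/(2(1+μ)) − x) + f_μ''(x) (x − x²)/2 ], where f_μ(x) := f(x)/ln_μ(x). -/

import Mathlib

open MeasureTheory Filter Set

/-- The logarithmic weight `ln_μ(x) = ln(1+μ+x)`. -/
noncomputable def lnMu (μ x : ℝ) : ℝ := Real.log (1 + μ + x)

/-- The function `a_{n+1}(x)` from the paper. -/
noncomputable def aFun (μ : ℝ) (n : ℕ) (x : ℝ) : ℝ :=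
  Real.log (1 + x / (((n : ℝ) + 1) * (1 + μ))) /
    Real.log (1 + 1 / (((n : ℝ) + 1) * (1 + μ)))

/-- Bernstein basis polynomial `p_{n,k}(x) = C(n,k) x^k (1-x)^{n-k}`. -/
noncomputable def bern (n k : ℕ) (x : ℝ) : ℝ :=
  (n.choose k : ℝ) * x ^ k * (1 - x) ^ (n - k)

/-- The Kantorovich logarithmic operator `𝓛ₙᴷ(f,x)`. -/
noncomputable def LK (μ : ℝ) (n : ℕ) (f : ℝ → ℝ) (x : ℝ) : ℝ :=
  lnMu μ x * ∑ k ∈ Finset.range (n + 1),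
    bern n k (aFun μ n x) * ((n : ℝ) + 1) *
      ∫ t in ((k : ℝ) / ((n : ℝ) + 1))..(((k : ℝ) + 1) / ((n : ℝ) + 1)), f t / lnMu μ t

/-- `γ_n := max_{x ∈ [0,1]} |a_{n+1}(x) - x|`. -/
noncomputable def gammaN (μ : ℝ) (n : ℕ) : ℝ :=
  ⨆ x : Set.Icc (0 : ℝ) 1, |aFun μ n (x : ℝ) - (x : ℝ)|

/-- Unweighted L^p norm `(∫₀¹ |f|^p)^(1/p)` on [0,1]. -/
noncomputable def normP (p : ℝ) (f : ℝ → ℝ) : ℝ :=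
  (∫ x in (0:ℝ)..1, |f x| ^ p) ^ (1 / p)

/-- Weighted L^p norm `(∫₀¹ |f/ln_μ|^p)^(1/p)` on [0,1]. -/
noncomputable def normPMu (μ p : ℝ) (f : ℝ → ℝ) : ℝ :=
  (∫ x in (0:ℝ)..1, |f x / lnMu μ x| ^ p) ^ (1 / p)


open intervalIntegral

lemma bern_nonneg {n k : ℕ} {a : ℝ} (h0 : 0 ≤ a) (h1 : a ≤ 1) : 0 ≤ bern n k a := by
  unfold bern
  have : (0:ℝ) ≤ 1 - a := by linarith
  positivity

lemma sum_bern (n : ℕ) (a : ℝ) : ∑ k ∈ Finset.range (n + 1), bern n k a = 1 := by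
  have h := add_pow a (1 - a) n
  simp only [add_sub_cancel, one_pow] at h
  calc ∑ k ∈ Finset.range (n + 1), bern n k a
      = ∑ k ∈ Finset.range (n + 1), a ^ k * (1 - a) ^ (n - k) * (n.choose k : ℝ) :=
        Finset.sum_congr rfl fun k _ => by unfold bern; ring
    _ = 1 := h.symm

lemma choose_mul_descFactorial {n k j : ℕ} (hjk : j ≤ k) (hkn : k ≤ n) :
    n.choose k * k.descFactorial j = n.descFactorial j * (n - j).choose (k - j) := by
  rw [Nat.descFactorial_eq_factorial_mul_choose k j, Nat.descFactorial_eq_factorial_mul_choose n j,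
    ← mul_assoc, mul_comm (n.choose k) (Nat.factorial j), mul_assoc, Nat.choose_mul hjk,
    mul_assoc]

lemma sum_bern_desc (n j : ℕ) (a : ℝ) :
    ∑ k ∈ Finset.range (n + 1), bern n k a * (k.descFactorial j : ℝ)
      = (n.descFactorial j : ℝ) * a ^ j := by
  rcases le_or_gt j n with hjn | hjn
  · have key : ∀ k ∈ Finset.range (n + 1), bern n k a * (k.descFactorial j : ℝ)
        = (n.descFactorial j : ℝ) * a ^ j *
          (if j ≤ k then bern (n - j) (k - j) a else 0) := by
      intro k hk
      rw [Finset.mem_range] at hk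
      have hkn : k ≤ n := Nat.lt_succ_iff.mp hk
      by_cases hjk : j ≤ k
      · simp only [hjk, if_true]
        unfold bern
        have h1 : (n.choose k : ℝ) * (k.descFactorial j : ℝ)
            = (n.descFactorial j : ℝ) * ((n - j).choose (k - j) : ℝ) := by
          rw_mod_cast [choose_mul_descFactorial hjk hkn]
        have hak : a ^ k = a ^ j * a ^ (k - j) := by
          rw [← pow_add]; congr 1; omega
        have hnk : (n - k) = ((n-j) - (k-j)) := by omega
        rw [hak, hnk]
        linear_combination (a ^ j * a ^ (k - j) * (1 - a) ^ (n - j - (k - j))) * h1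
      · simp only [hjk, if_false]
        rw [Nat.descFactorial_eq_zero_iff_lt.2 (by omega)]
        simp
    rw [Finset.sum_congr rfl key, ← Finset.mul_sum]
    have step : ∑ k ∈ Finset.range (n + 1), (if j ≤ k then bern (n - j) (k - j) a else 0)
        = ∑ k ∈ Finset.Ico j (n + 1), (if j ≤ k then bern (n - j) (k - j) a else 0) := by
      refine (Finset.sum_subset ?_ ?_).symm
      · intro k hk; rw [Finset.mem_Ico] at hk; rw [Finset.mem_range]; omega
      · intro k hk hk'
        rw [Finset.mem_range] at hk; rw [Finset.mem_Ico] at hk'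
        have : ¬ j ≤ k := by omega
        simp [this]
    rw [step, Finset.sum_Ico_eq_sum_range]
    have h2 : ∀ m ∈ Finset.range (n + 1 - j), (if j ≤ j + m then bern (n - j) (j + m - j) a else 0)
        = bern (n - j) m a := by
      intro m _
      simp
    rw [Finset.sum_congr rfl h2]
    have : n + 1 - j = (n - j) + 1 := by omega
    rw [this, sum_bern, mul_one]
  · have key : ∀ k ∈ Finset.range (n + 1), bern n k a * (k.descFactorial j : ℝ) = 0 := by
      intro k hk
      rw [Finset.mem_range] at hk
      rw [Nat.descFactorial_eq_zero_iff_lt.2 (by omega)]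
      simp
    rw [Finset.sum_congr rfl key]
    rw [Nat.descFactorial_eq_zero_iff_lt.2 hjn]
    simp

lemma cast_desc1 (k : ℕ) : (k.descFactorial 1 : ℝ) = (k:ℝ) := by
  simp [Nat.descFactorial]

lemma cast_desc2 (k : ℕ) : (k.descFactorial 2 : ℝ) = (k:ℝ) * ((k:ℝ) - 1) :=
  Nat.cast_descFactorial_two (S := ℝ) k

lemma cast_desc3 (k : ℕ) : (k.descFactorial 3 : ℝ) = (k:ℝ) * ((k:ℝ) - 1) * ((k:ℝ) - 2) := by
  rcases k with _ | _ | _ | m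
  · simp [Nat.descFactorial]
  · simp [Nat.descFactorial]
  · norm_num [Nat.descFactorial]
  · simp only [Nat.descFactorial_succ, Nat.descFactorial_zero, Nat.descFactorial_one]
    push_cast [Nat.succ_sub_one]
    ring_nf

lemma cast_desc4 (k : ℕ) :
    (k.descFactorial 4 : ℝ) = (k:ℝ) * ((k:ℝ) - 1) * ((k:ℝ) - 2) * ((k:ℝ) - 3) := by
  rcases k with _ | _ | _ | _ | m
  · simp [Nat.descFactorial]
  · simp [Nat.descFactorial]
  · norm_num [Nat.descFactorial]
  · norm_num [Nat.descFactorial]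
  · simp only [Nat.descFactorial_succ, Nat.descFactorial_zero, Nat.descFactorial_one]
    push_cast [Nat.succ_sub_one]
    ring_nf

lemma sum_bern_k (n : ℕ) (a : ℝ) :
    ∑ k ∈ Finset.range (n + 1), bern n k a * (k:ℝ) = (n:ℝ) * a := by
  have h := sum_bern_desc n 1 a
  simp only [cast_desc1] at h
  simpa using h

lemma sum_bern_k2 (n : ℕ) (a : ℝ) :
    ∑ k ∈ Finset.range (n + 1), bern n k a * (k:ℝ)^2
      = (n:ℝ) * ((n:ℝ) - 1) * a^2 + (n:ℝ) * a := by
  have e : ∀ k ∈ Finset.range (n + 1), bern n k a * (k:ℝ)^2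
      = bern n k a * (k.descFactorial 2 : ℝ) + bern n k a * (k:ℝ) := by
    intro k _; rw [cast_desc2]; ring
  rw [Finset.sum_congr rfl e, Finset.sum_add_distrib, sum_bern_desc, sum_bern_k, cast_desc2]

lemma sum_bern_k3 (n : ℕ) (a : ℝ) :
    ∑ k ∈ Finset.range (n + 1), bern n k a * (k:ℝ)^3
      = (n:ℝ) * ((n:ℝ) - 1) * ((n:ℝ) - 2) * a^3 + 3 * ((n:ℝ) * ((n:ℝ) - 1) * a^2)
        + (n:ℝ) * a := by
  have e : ∀ k ∈ Finset.range (n + 1), bern n k a * (k:ℝ)^3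
      = bern n k a * (k.descFactorial 3 : ℝ) + 3 * (bern n k a * (k.descFactorial 2 : ℝ))
        + bern n k a * (k:ℝ) := by
    intro k _; rw [cast_desc2, cast_desc3]; ring
  rw [Finset.sum_congr rfl e, Finset.sum_add_distrib, Finset.sum_add_distrib,
    ← Finset.mul_sum, sum_bern_desc, sum_bern_desc, sum_bern_k, cast_desc2, cast_desc3]

lemma sum_bern_k4 (n : ℕ) (a : ℝ) :
    ∑ k ∈ Finset.range (n + 1), bern n k a * (k:ℝ)^4
      = (n:ℝ) * ((n:ℝ) - 1) * ((n:ℝ) - 2) * ((n:ℝ) - 3) * a^4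
        + 6 * ((n:ℝ) * ((n:ℝ) - 1) * ((n:ℝ) - 2) * a^3)
        + 7 * ((n:ℝ) * ((n:ℝ) - 1) * a^2) + (n:ℝ) * a := by
  have e : ∀ k ∈ Finset.range (n + 1), bern n k a * (k:ℝ)^4
      = bern n k a * (k.descFactorial 4 : ℝ) + 6 * (bern n k a * (k.descFactorial 3 : ℝ))
        + 7 * (bern n k a * (k.descFactorial 2 : ℝ)) + bern n k a * (k:ℝ) := by
    intro k _; rw [cast_desc2, cast_desc3, cast_desc4]; ring
  rw [Finset.sum_congr rfl e, Finset.sum_add_distrib, Finset.sum_add_distrib,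
    Finset.sum_add_distrib, ← Finset.mul_sum, ← Finset.mul_sum, sum_bern_desc, sum_bern_desc,
    sum_bern_desc, sum_bern_k, cast_desc2, cast_desc3, cast_desc4]

lemma sum_bern_central4 (n : ℕ) (a : ℝ) :
    ∑ k ∈ Finset.range (n + 1), bern n k a * ((k:ℝ) - (n:ℝ)*a)^4
      = (n:ℝ) * a * (1-a) * (1 + 3 * ((n:ℝ) - 2) * a * (1-a)) := by
  have e : ∀ k ∈ Finset.range (n + 1), bern n k a * ((k:ℝ) - (n:ℝ)*a)^4
      = bern n k a * (k:ℝ)^4 - 4*((n:ℝ)*a) * (bern n k a * (k:ℝ)^3)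
        + 6*((n:ℝ)*a)^2 * (bern n k a * (k:ℝ)^2) - 4*((n:ℝ)*a)^3 * (bern n k a * (k:ℝ))
        + ((n:ℝ)*a)^4 * bern n k a := by
    intro k _; ring
  rw [Finset.sum_congr rfl e, Finset.sum_add_distrib, Finset.sum_sub_distrib,
    Finset.sum_add_distrib, Finset.sum_sub_distrib, ← Finset.mul_sum, ← Finset.mul_sum,
    ← Finset.mul_sum, ← Finset.mul_sum, sum_bern_k4, sum_bern_k3, sum_bern_k2, sum_bern_k,
    sum_bern]
  ring

lemma sum_bern_central4_le (n : ℕ) (a : ℝ) (h0 : 0 ≤ a) (h1 : a ≤ 1) :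
    ∑ k ∈ Finset.range (n + 1), bern n k a * ((k:ℝ) - (n:ℝ)*a)^4 ≤ (n:ℝ)^2 := by
  rw [sum_bern_central4]
  rcases Nat.eq_zero_or_pos n with hn | hn
  · subst hn; norm_num
  · have hN : (1:ℝ) ≤ (n:ℝ) := by exact_mod_cast hn
    have hp0 : 0 ≤ a * (1-a) := mul_nonneg h0 (by linarith)
    have hp : a * (1-a) ≤ 1/4 := by nlinarith [sq_nonneg (a - 1/2)]
    have hNn : (0:ℝ) ≤ (n:ℝ) := by positivity
    have h2 : (a*(1-a))^2 ≤ 1/16 := by nlinarith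
    have t1 : (n:ℝ)*(a*(1-a)) ≤ (n:ℝ)/4 := by nlinarith
    have t2 : 3*(n:ℝ)^2*(a*(1-a))^2 ≤ 3*(n:ℝ)^2/16 := by nlinarith [sq_nonneg (n:ℝ)]
    have t3 : 0 ≤ 6*(n:ℝ)*(a*(1-a))^2 := by positivity
    nlinarith [t1, t2, t3, hN, mul_le_mul hN hN (by norm_num) hNn]

lemma tendsto_of_abs_sub_le {f g : ℕ → ℝ} {l : ℝ}
    (h : ∀ᶠ n in atTop, |f n - l| ≤ g n) (hg : Tendsto g atTop (nhds 0)) :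
    Tendsto f atTop (nhds l) :=
  tendsto_sub_nhds_zero_iff.mp
    (squeeze_zero_norm' (by simpa [Real.norm_eq_abs] using h) hg)

lemma log_taylor2 {y : ℝ} (h0 : 0 ≤ y) (h2 : y ≤ 1/2) :
    |Real.log (1+y) - (y - y^2/2)| ≤ 2*y^3 := by
  have hlt : |(-y)| < 1 := by rw [abs_neg, abs_of_nonneg h0]; linarith
  have H := Real.abs_log_sub_add_sum_range_le hlt 2
  have hsum : (∑ i ∈ Finset.range 2, (-y) ^ (i + 1) / ((i:ℝ) + 1)) = -y + y^2/2 := by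
    rw [Finset.sum_range_succ, Finset.sum_range_one]
    norm_num
  rw [hsum] at H
  have h1mx : (1:ℝ) - -y = 1 + y := by ring
  rw [h1mx, abs_neg, abs_of_nonneg h0] at H
  have hb : y ^ (2 + 1) / (1 - y) ≤ 2 * y^3 := by
    rw [div_le_iff₀ (by linarith)]
    have h3 : y^(2+1) = y^3 := by ring
    rw [h3]
    nlinarith [mul_le_mul_of_nonneg_left h2 (pow_nonneg h0 3)]
  have hre : Real.log (1+y) - (y - y^2/2) = -y + y^2/2 + Real.log (1+y) := by ring
  rw [hre]
  exact H.trans hb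

lemma aFun_mem {μ x : ℝ} (hμ : 0 < μ) (hx : x ∈ Icc (0:ℝ) 1) (n : ℕ) :
    aFun μ n x ∈ Icc (0:ℝ) 1 := by
  obtain ⟨hx0, hx1⟩ := hx
  have hDpos : (0:ℝ) < ((n : ℝ) + 1) * (1 + μ) := by positivity
  have hnum0 : 0 ≤ Real.log (1 + x / (((n : ℝ) + 1) * (1 + μ))) :=
    Real.log_nonneg (by nlinarith [div_nonneg hx0 hDpos.le])
  have hmono : Real.log (1 + x / (((n : ℝ) + 1) * (1 + μ)))
      ≤ Real.log (1 + 1 / (((n : ℝ) + 1) * (1 + μ))) := by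
    apply Real.log_le_log (by nlinarith [div_nonneg hx0 hDpos.le])
    gcongr
  have hden : 0 < Real.log (1 + 1 / (((n : ℝ) + 1) * (1 + μ))) :=
    Real.log_pos (by nlinarith [one_div_pos.mpr hDpos])
  unfold aFun
  constructor
  · exact div_nonneg hnum0 hden.le
  · rw [div_le_one hden]; exact hmono

lemma tendsto_n_aFun_sub (μ x : ℝ) (hμ : 0 < μ) (hx : x ∈ Icc (0:ℝ) 1) :
    Tendsto (fun n : ℕ => (n:ℝ) * (aFun μ n x - x)) atTop
      (nhds ((x - x^2)/(2*(1+μ)))) := by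
  obtain ⟨hx0, hx1⟩ := hx
  set e : ℕ → ℝ := fun n => 1/(((n:ℝ)+1)*(1+μ)) with he
  have hepos : ∀ n : ℕ, (0:ℝ) < e n := by
    intro n; simp only [he]; positivity
  have hehalf : ∀ᶠ n in atTop, e n ≤ 1/2 := by
    filter_upwards [eventually_ge_atTop 1] with n hn
    have h1 : (1:ℝ) ≤ (n:ℝ) := by exact_mod_cast hn
    simp only [he]
    rw [div_le_div_iff₀ (by positivity) (by norm_num)]
    nlinarith
  have he0 : Tendsto e atTop (nhds 0) := by
    have h := (tendsto_one_div_add_atTop_nhds_zero_nat).const_mul (1/(1+μ))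
    rw [mul_zero] at h
    refine h.congr fun n => ?_
    simp only [he, one_div_mul_one_div]
    ring_nf
  set Den : ℕ → ℝ := fun n => Real.log (1 + e n) with hDen
  set Num : ℕ → ℝ := fun n => Real.log (1 + x * e n) with hNum
  have hDenpos : ∀ n, 0 < Den n := fun n => Real.log_pos (by linarith [hepos n])
  have haeq : ∀ n, aFun μ n x = Num n / Den n := by
    intro n
    unfold aFun
    simp only [hNum, hDen, he, div_eq_mul_inv]
    ring_nf
  have hf1 : Tendsto (fun n : ℕ => (n:ℝ) * e n) atTop (nhds (1/(1+μ))) := by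
    have h := tendsto_natCast_div_add_atTop (1:ℝ)
    have h2 := h.mul (tendsto_const_nhds :
      Tendsto (fun _ : ℕ => 1/(1+μ)) atTop (nhds (1/(1+μ))))
    rw [one_mul] at h2
    refine h2.congr fun n => ?_
    simp only [he]
    field_simp
  have hf2 : Tendsto (fun n : ℕ => (Num n - x * Den n)/(e n)^2) atTop
      (nhds ((x - x^2)/2)) := by
    apply tendsto_of_abs_sub_le (g := fun n => 4 * e n)
    · filter_upwards [hehalf] with n hn
      have he' := hepos n
      have hxe0 : 0 ≤ x * e n := by positivity
      have hxe2 : x * e n ≤ 1/2 := by nlinarith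
      have h1 := log_taylor2 hxe0 hxe2
      have h2 := log_taylor2 he'.le hn
      have key : (Num n - x * Den n)/(e n)^2 - (x - x^2)/2
          = ((Num n - (x*e n - (x*e n)^2/2)) - x * (Den n - (e n - (e n)^2/2)))/(e n)^2 := by
        field_simp
        ring
      rw [key, abs_div, abs_of_nonneg (by positivity : (0:ℝ) ≤ (e n)^2),
        div_le_iff₀ (by positivity)]
      have hb1 : |Num n - (x*e n - (x*e n)^2/2)| ≤ 2 * (e n)^3 := by
        refine h1.trans ?_
        have : (x * e n)^3 ≤ (e n)^3 := pow_le_pow_left₀ hxe0 (by nlinarith) 3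
        linarith
      have hb2 : |x * (Den n - (e n - (e n)^2/2))| ≤ 2 * (e n)^3 := by
        rw [abs_mul, abs_of_nonneg hx0]
        nlinarith [abs_nonneg (Den n - (e n - (e n)^2/2))]
      calc |Num n - (x*e n - (x*e n)^2/2) - x * (Den n - (e n - (e n)^2/2))|
          ≤ |Num n - (x*e n - (x*e n)^2/2)| + |x * (Den n - (e n - (e n)^2/2))| :=
            abs_sub _ _
        _ ≤ 4 * (e n)^3 := by linarith
        _ = 4 * e n * (e n)^2 := by ring
    · have h4 := he0.const_mul (4:ℝ)
      rw [mul_zero] at h4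
      exact h4
  have hf3 : Tendsto (fun n : ℕ => Den n / e n) atTop (nhds 1) := by
    apply tendsto_of_abs_sub_le (g := fun n => (3/2) * e n)
    · filter_upwards [hehalf] with n hn
      have he' := hepos n
      have h2 := log_taylor2 he'.le hn
      have key : Den n / e n - 1 = (Den n - (e n - (e n)^2/2))/(e n) + (- (e n)/2) := by
        field_simp
        ring
      rw [key]
      calc |(Den n - (e n - (e n)^2/2))/(e n) + (- (e n)/2)|
          ≤ |(Den n - (e n - (e n)^2/2))/(e n)| + |(- (e n)/2)| := abs_add_le _ _
        _ ≤ 2*(e n)^2 + e n/2 := by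
            have ha : |(Den n - (e n - (e n)^2/2))/(e n)| ≤ 2*(e n)^2 := by
              rw [abs_div, abs_of_nonneg he'.le, div_le_iff₀ he']
              nlinarith
            have hb : |(- (e n)/2)| = e n / 2 := by
              rw [abs_div, abs_neg, abs_of_nonneg he'.le]
              norm_num
            linarith
        _ ≤ (3/2) * e n := by nlinarith
    · have h4 := he0.const_mul (3/2:ℝ)
      rw [mul_zero] at h4
      exact h4
  have hcomb : Tendsto (fun n : ℕ =>
      ((n:ℝ) * e n) * ((Num n - x * Den n)/(e n)^2) / (Den n / e n))
      atTop (nhds ((1/(1+μ)) * ((x - x^2)/2) / 1)) := (hf1.mul hf2).div hf3 one_ne_zero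
  have hne : (1+μ) ≠ 0 := by linarith
  have hval : (1/(1+μ)) * ((x - x^2)/2) / 1 = (x - x^2)/(2*(1+μ)) := by
    rw [div_one]
    field_simp
  rw [hval] at hcomb
  refine hcomb.congr fun n => ?_
  have he' := (hepos n)
  have hD' := (hDenpos n).ne'
  rw [haeq n]
  field_simp

lemma taylor_bound {g : ℝ → ℝ} (hg : ContDiffOn ℝ 2 g (Icc (0:ℝ) 1)) {x : ℝ}
    (hx : x ∈ Icc (0:ℝ) 1) {ε : ℝ} (hε : 0 < ε) :
    ∃ δ > 0, ∀ t ∈ Icc (0:ℝ) 1, |t - x| ≤ δ →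
      |g t - g x - derivWithin g (Icc 0 1) x * (t - x)
        - derivWithin (derivWithin g (Icc 0 1)) (Icc 0 1) x / 2 * (t - x)^2|
      ≤ ε * (t - x)^2 := by
  have hu : UniqueDiffOn ℝ (Icc (0:ℝ) 1) := uniqueDiffOn_Icc one_pos
  set g1 := derivWithin g (Icc (0:ℝ) 1) with hg1def
  set g2 := derivWithin g1 (Icc (0:ℝ) 1) with hg2def
  have hg1 : ContDiffOn ℝ 1 g1 (Icc (0:ℝ) 1) := hg.derivWithin hu (by norm_num)
  have hdiffg : DifferentiableOn ℝ g (Icc (0:ℝ) 1) := hg.differentiableOn (by norm_num)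
  have hdiffg1 : DifferentiableOn ℝ g1 (Icc (0:ℝ) 1) := hg1.differentiableOn (by norm_num)
  have hg2cont : ContinuousOn g2 (Icc (0:ℝ) 1) :=
    (ContDiffOn.derivWithin (m := 0) hg1 hu (by norm_num)).continuousOn
  have hc : ContinuousWithinAt g2 (Icc (0:ℝ) 1) x := hg2cont x hx
  rw [Metric.continuousWithinAt_iff] at hc
  obtain ⟨δ, hδpos, hδ⟩ := hc ε hε
  refine ⟨δ/2, by positivity, fun t ht htδ => ?_⟩
  set r := |t - x| with hrdef
  have hr0 : 0 ≤ r := abs_nonneg _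
  set J := Icc (0:ℝ) 1 ∩ Icc (x - r) (x + r) with hJdef
  have hJsub : J ⊆ Icc (0:ℝ) 1 := inter_subset_left
  have hJconv : Convex ℝ J := (convex_Icc 0 1).inter (convex_Icc _ _)
  have hxJ : x ∈ J := ⟨hx, by constructor <;> linarith⟩
  have htJ : t ∈ J := ⟨ht, by
    have := abs_le.mp (le_refl r)
    rw [hrdef] at this ⊢
    constructor <;> [linarith [this.1]; linarith [this.2]]⟩
  have hg2close : ∀ s ∈ J, |g2 s - g2 x| ≤ ε := by
    intro s hs
    have hsI := hJsub hs
    have hsr : |s - x| ≤ r := by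
      obtain ⟨_, hs2⟩ := hs
      rw [abs_le]; constructor <;> [linarith [hs2.1]; linarith [hs2.2]]
    have : dist s x < δ := by
      rw [Real.dist_eq]
      calc |s - x| ≤ r := hsr
        _ ≤ δ/2 := htδ
        _ < δ := by linarith
    exact (le_of_lt (by simpa [Real.dist_eq] using hδ hsI this))
  -- first MVT: ψ s := g1 s - g1 x - g2 x * (s - x)
  have hψderiv : ∀ s ∈ J, HasDerivWithinAt
      (fun s => g1 s - g1 x - g2 x * (s - x)) (g2 s - g2 x) J s := by
    intro s hs
    have h1 : HasDerivWithinAt g1 (g2 s) J s :=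
      ((hdiffg1 s (hJsub hs)).hasDerivWithinAt).mono hJsub
    have h2 : HasDerivWithinAt (fun s => g2 x * (s - x)) (g2 x) J s := by
      simpa using ((hasDerivWithinAt_id s J).sub_const x).const_mul (g2 x)
    exact (h1.sub_const (g1 x)).sub h2
  have hψbound : ∀ s ∈ J, |g1 s - g1 x - g2 x * (s - x)| ≤ ε * r := by
    intro s hs
    have := Convex.norm_image_sub_le_of_norm_hasDerivWithin_le hψderiv
      (fun s hs => by simpa [Real.norm_eq_abs] using hg2close s hs) hJconv hxJ hs
    simp only [Real.norm_eq_abs, sub_self, mul_zero, sub_zero] at this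
    have hsr : |s - x| ≤ r := by
      obtain ⟨_, hs2⟩ := hs
      rw [abs_le]; constructor <;> [linarith [hs2.1]; linarith [hs2.2]]
    calc |g1 s - g1 x - g2 x * (s - x)| ≤ ε * |s - x| := by simpa using this
      _ ≤ ε * r := by nlinarith
  -- second MVT: φ s := g s - g x - g1 x * (s - x) - g2 x / 2 * (s - x)^2
  have hφderiv : ∀ s ∈ J, HasDerivWithinAt
      (fun s => g s - g x - g1 x * (s - x) - g2 x / 2 * (s - x)^2)
      (g1 s - g1 x - g2 x * (s - x)) J s := by
    intro s hs
    have h1 : HasDerivWithinAt g (g1 s) J s :=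
      ((hdiffg s (hJsub hs)).hasDerivWithinAt).mono hJsub
    have h2 : HasDerivWithinAt (fun s => g1 x * (s - x)) (g1 x) J s := by
      simpa using ((hasDerivWithinAt_id s J).sub_const x).const_mul (g1 x)
    have h3 : HasDerivWithinAt (fun s => g2 x / 2 * (s - x)^2)
        (g2 x * (s - x)) J s := by
      have := (((hasDerivWithinAt_id s J).sub_const x).pow 2).const_mul (g2 x / 2)
      exact this.congr_deriv (by simp; ring)
    exact ((h1.sub_const (g x)).sub h2).sub h3
  have := Convex.norm_image_sub_le_of_norm_hasDerivWithin_le hφderiv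
    (fun s hs => by simpa [Real.norm_eq_abs] using hψbound s hs) hJconv hxJ htJ
  simp only [Real.norm_eq_abs, sub_self, mul_zero, zero_pow, sub_zero] at this
  calc |g t - g x - g1 x * (t - x) - g2 x / 2 * (t - x)^2|
      ≤ ε * r * |t - x| := by simpa using this
    _ = ε * (t - x)^2 := by rw [hrdef, mul_assoc, ← pow_two, sq_abs]

lemma taylor_global {g : ℝ → ℝ} (hg : ContDiffOn ℝ 2 g (Icc (0:ℝ) 1)) {x : ℝ}
    (hx : x ∈ Icc (0:ℝ) 1) :
    ∃ C, 0 ≤ C ∧ ∀ t ∈ Icc (0:ℝ) 1,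
      |g t - g x - derivWithin g (Icc 0 1) x * (t - x)
        - derivWithin (derivWithin g (Icc 0 1)) (Icc 0 1) x / 2 * (t - x)^2| ≤ C := by
  have hcont : ContinuousOn (fun t => g t - g x - derivWithin g (Icc 0 1) x * (t - x)
      - derivWithin (derivWithin g (Icc 0 1)) (Icc 0 1) x / 2 * (t - x)^2) (Icc (0:ℝ) 1) := by
    have h1 := hg.continuousOn
    fun_prop
  obtain ⟨C, hC⟩ := IsCompact.exists_bound_of_continuousOn isCompact_Icc hcont
  refine ⟨max C 0, le_max_right _ _, fun t ht => ?_⟩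
  have := hC t ht
  rw [Real.norm_eq_abs] at this
  exact this.trans (le_max_left _ _)

lemma sum_bern_lin (n : ℕ) (a X : ℝ) :
    ∑ k ∈ Finset.range (n + 1), bern n k a * (2*((k:ℝ) - X) + 1)
      = 2*((n:ℝ)*a - X) + 1 := by
  have e : ∀ k ∈ Finset.range (n + 1), bern n k a * (2*((k:ℝ) - X) + 1)
      = 2*(bern n k a * (k:ℝ)) + (1 - 2*X) * bern n k a := by
    intro k _; ring
  rw [Finset.sum_congr rfl e, Finset.sum_add_distrib, ← Finset.mul_sum, ← Finset.mul_sum,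
    sum_bern_k, sum_bern]
  ring

lemma sum_bern_quad (n : ℕ) (a X : ℝ) :
    ∑ k ∈ Finset.range (n + 1), bern n k a * (3*((k:ℝ) - X)^2 + 3*((k:ℝ) - X) + 1)
      = 3*((n:ℝ)*a*(1-a) + ((n:ℝ)*a - X)^2) + 3*((n:ℝ)*a - X) + 1 := by
  have e : ∀ k ∈ Finset.range (n + 1), bern n k a * (3*((k:ℝ) - X)^2 + 3*((k:ℝ) - X) + 1)
      = 3*(bern n k a * (k:ℝ)^2) + (3 - 6*X)*(bern n k a * (k:ℝ))
        + (3*X^2 - 3*X + 1) * bern n k a := by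
    intro k _; ring
  rw [Finset.sum_congr rfl e, Finset.sum_add_distrib, Finset.sum_add_distrib,
    ← Finset.mul_sum, ← Finset.mul_sum, ← Finset.mul_sum, sum_bern_k2, sum_bern_k, sum_bern]
  ring

lemma sum_bern_quart_le (n : ℕ) (a X : ℝ) (h0 : 0 ≤ a) (h1 : a ≤ 1) :
    ∑ k ∈ Finset.range (n + 1), bern n k a * ((k:ℝ) - X)^4
      ≤ 8*(n:ℝ)^2 + 8*((n:ℝ)*a - X)^4 := by
  have pt : ∀ k ∈ Finset.range (n + 1), bern n k a * ((k:ℝ) - X)^4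
      ≤ 8*(bern n k a * ((k:ℝ) - (n:ℝ)*a)^4) + (8*((n:ℝ)*a - X)^4) * bern n k a := by
    intro k _
    have hb := bern_nonneg (n := n) (k := k) h0 h1
    have h8 : ((k:ℝ) - X)^4 ≤ 8*((k:ℝ) - (n:ℝ)*a)^4 + 8*((n:ℝ)*a - X)^4 := by
      nlinarith [sq_nonneg (((k:ℝ) - (n:ℝ)*a) - ((n:ℝ)*a - X)),
        sq_nonneg (((k:ℝ) - (n:ℝ)*a) + ((n:ℝ)*a - X)),
        sq_nonneg (((k:ℝ) - (n:ℝ)*a)^2 - ((n:ℝ)*a - X)^2),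
        sq_nonneg (((k:ℝ) - (n:ℝ)*a)^2 + ((n:ℝ)*a - X)^2),
        sq_nonneg (((k:ℝ) - (n:ℝ)*a) * ((n:ℝ)*a - X))]
    nlinarith [mul_le_mul_of_nonneg_left h8 hb]
  calc ∑ k ∈ Finset.range (n + 1), bern n k a * ((k:ℝ) - X)^4
      ≤ ∑ k ∈ Finset.range (n + 1),
          (8*(bern n k a * ((k:ℝ) - (n:ℝ)*a)^4) + (8*((n:ℝ)*a - X)^4) * bern n k a) :=
        Finset.sum_le_sum pt
    _ = 8*(∑ k ∈ Finset.range (n + 1), bern n k a * ((k:ℝ) - (n:ℝ)*a)^4)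
        + (8*((n:ℝ)*a - X)^4) * (∑ k ∈ Finset.range (n + 1), bern n k a) := by
        rw [Finset.sum_add_distrib, ← Finset.mul_sum, ← Finset.mul_sum]
    _ ≤ 8*(n:ℝ)^2 + 8*((n:ℝ)*a - X)^4 := by
        rw [sum_bern]
        nlinarith [sum_bern_central4_le n a h0 h1]

lemma integral_sub_pow (c d x : ℝ) (j : ℕ) :
    ∫ t in c..d, (t - x)^j = ((d - x)^(j+1) - (c - x)^(j+1))/((j:ℝ)+1) := by
  rw [show (∫ t in c..d, (t - x)^j) = ∫ t in c..d, (fun s => s ^ j) (t - x) from rfl,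
    intervalIntegral.integral_comp_sub_right (fun s => s ^ j) x, integral_pow]

section decomp
variable {n k : ℕ}

lemma interval_subset (hk : k ∈ Finset.range (n+1)) :
    Set.uIcc ((k:ℝ)/((n:ℝ)+1)) (((k:ℝ)+1)/((n:ℝ)+1)) ⊆ Icc (0:ℝ) 1 := by
  rw [Finset.mem_range] at hk
  have hk' : (k:ℝ) ≤ (n:ℝ) := by exact_mod_cast Nat.lt_succ_iff.mp hk
  have hn1 : (0:ℝ) < (n:ℝ)+1 := by positivity
  rw [Set.uIcc_of_le (by gcongr; linarith)]
  apply Set.Icc_subset_Icc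
  · positivity
  · rw [div_le_one hn1]; linarith

lemma decomp (n : ℕ) (a x b1 b2 : ℝ) (g E : ℝ → ℝ)
    (hgc : ContinuousOn g (Icc (0:ℝ) 1))
    (hEc : ContinuousOn E (Icc (0:ℝ) 1))
    (hE : ∀ t, E t = g t - g x - b1 * (t - x) - b2/2 * (t - x)^2) :
    ∑ k ∈ Finset.range (n+1), bern n k a * ((n:ℝ)+1) *
        ∫ t in ((k:ℝ)/((n:ℝ)+1))..(((k:ℝ)+1)/((n:ℝ)+1)), g t
      = g x + b1 * ((2*((n:ℝ)*a - ((n:ℝ)+1)*x) + 1)/(2*((n:ℝ)+1)))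
        + b2/2 * ((3*((n:ℝ)*a*(1-a) + ((n:ℝ)*a - ((n:ℝ)+1)*x)^2)
            + 3*((n:ℝ)*a - ((n:ℝ)+1)*x) + 1)/(3*((n:ℝ)+1)^2))
        + ∑ k ∈ Finset.range (n+1), bern n k a * (((n:ℝ)+1) *
            ∫ t in ((k:ℝ)/((n:ℝ)+1))..(((k:ℝ)+1)/((n:ℝ)+1)), E t) := by
  have hn1 : (0:ℝ) < (n:ℝ)+1 := by positivity
  have key : ∀ k ∈ Finset.range (n+1), bern n k a * ((n:ℝ)+1) *
        ∫ t in ((k:ℝ)/((n:ℝ)+1))..(((k:ℝ)+1)/((n:ℝ)+1)), g t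
      = bern n k a * g x
        + b1 * (bern n k a * ((2*((k:ℝ) - ((n:ℝ)+1)*x) + 1)/(2*((n:ℝ)+1))))
        + b2/2 * (bern n k a * ((3*((k:ℝ) - ((n:ℝ)+1)*x)^2 + 3*((k:ℝ) - ((n:ℝ)+1)*x) + 1)/(3*((n:ℝ)+1)^2)))
        + bern n k a * (((n:ℝ)+1) *
            ∫ t in ((k:ℝ)/((n:ℝ)+1))..(((k:ℝ)+1)/((n:ℝ)+1)), E t) := by
    intro k hk
    set c : ℝ := (k:ℝ)/((n:ℝ)+1) with hc
    set d : ℝ := ((k:ℝ)+1)/((n:ℝ)+1) with hd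
    have hsub := interval_subset hk
    have hig : IntervalIntegrable g volume c d :=
      (hgc.mono hsub).intervalIntegrable
    have hiE : IntervalIntegrable E volume c d :=
      (hEc.mono hsub).intervalIntegrable
    have hi1 : IntervalIntegrable (fun t => b1 * (t - x)^1) volume c d := by
      apply Continuous.intervalIntegrable; continuity
    have hi2 : IntervalIntegrable (fun t => b2/2 * (t - x)^2) volume c d := by
      apply Continuous.intervalIntegrable; continuity
    have hgsplit : ∫ t in c..d, g t
        = ∫ t in c..d, (g x + (b1 * (t - x)^1 + (b2/2 * (t - x)^2 + E t))) := by
      apply intervalIntegral.integral_congr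
      intro t _
      show g t = g x + (b1 * (t - x)^1 + (b2/2 * (t - x)^2 + E t))
      rw [hE t]; ring
    rw [hgsplit, intervalIntegral.integral_add intervalIntegrable_const
        (hi1.add (hi2.add hiE)),
      intervalIntegral.integral_add hi1 (hi2.add hiE),
      intervalIntegral.integral_add hi2 hiE,
      intervalIntegral.integral_const,
      intervalIntegral.integral_const_mul, intervalIntegral.integral_const_mul,
      integral_sub_pow, integral_sub_pow]
    have hdc : d - c = 1/((n:ℝ)+1) := by rw [hc, hd]; field_simp; ring
    have hd1 : d - x = (((k:ℝ) - ((n:ℝ)+1)*x) + 1)/((n:ℝ)+1) := by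
      rw [hd]; field_simp; ring
    have hc1 : c - x = ((k:ℝ) - ((n:ℝ)+1)*x)/((n:ℝ)+1) := by
      rw [hc]; field_simp
    rw [hdc, hd1, hc1, smul_eq_mul]
    push_cast
    field_simp
    ring
  have hS1 : ∑ k ∈ Finset.range (n+1),
      bern n k a * ((2*((k:ℝ) - ((n:ℝ)+1)*x) + 1)/(2*((n:ℝ)+1)))
      = (2*((n:ℝ)*a - ((n:ℝ)+1)*x) + 1)/(2*((n:ℝ)+1)) := by
    have e2 : ∀ k ∈ Finset.range (n+1),
        bern n k a * ((2*((k:ℝ) - ((n:ℝ)+1)*x) + 1)/(2*((n:ℝ)+1)))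
        = (bern n k a * (2*((k:ℝ) - ((n:ℝ)+1)*x) + 1)) * (1/(2*((n:ℝ)+1))) := by
      intro k _; ring
    rw [Finset.sum_congr rfl e2, ← Finset.sum_mul, sum_bern_lin]
    ring
  have hS2 : ∑ k ∈ Finset.range (n+1),
      bern n k a * ((3*((k:ℝ) - ((n:ℝ)+1)*x)^2 + 3*((k:ℝ) - ((n:ℝ)+1)*x) + 1)/(3*((n:ℝ)+1)^2))
      = (3*((n:ℝ)*a*(1-a) + ((n:ℝ)*a - ((n:ℝ)+1)*x)^2)
          + 3*((n:ℝ)*a - ((n:ℝ)+1)*x) + 1)/(3*((n:ℝ)+1)^2) := by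
    have e3 : ∀ k ∈ Finset.range (n+1),
        bern n k a * ((3*((k:ℝ) - ((n:ℝ)+1)*x)^2 + 3*((k:ℝ) - ((n:ℝ)+1)*x) + 1)/(3*((n:ℝ)+1)^2))
        = (bern n k a * (3*((k:ℝ) - ((n:ℝ)+1)*x)^2 + 3*((k:ℝ) - ((n:ℝ)+1)*x) + 1)) * (1/(3*((n:ℝ)+1)^2)) := by
      intro k _; ring
    rw [Finset.sum_congr rfl e3, ← Finset.sum_mul, sum_bern_quad]
    ring
  rw [Finset.sum_congr rfl key, Finset.sum_add_distrib, Finset.sum_add_distrib,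
    Finset.sum_add_distrib, ← Finset.sum_mul, sum_bern, one_mul, ← Finset.mul_sum,
    ← Finset.mul_sum, hS1, hS2]

end decomp

lemma quart_bound {p : ℝ} (hp : 0 ≤ p) : (p + 1)^4 ≤ 8*(p^4 + 1) := by
  nlinarith [sq_nonneg (p - 1), sq_nonneg (p^2 - 1), sq_nonneg (p^2 - p), sq_nonneg p,
    pow_nonneg hp 3, pow_nonneg hp 4]

set_option maxHeartbeats 1000000 in
lemma R_bound (n : ℕ) (a x ε K : ℝ) (h0 : 0 ≤ a) (h1 : a ≤ 1) (hε : 0 ≤ ε) (hK : 0 ≤ K)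
    (E : ℝ → ℝ) (hEc : ContinuousOn E (Icc (0:ℝ) 1))
    (hEb : ∀ t ∈ Icc (0:ℝ) 1, |E t| ≤ ε*(t-x)^2 + K*(t-x)^4) :
    |∑ k ∈ Finset.range (n+1), bern n k a * (((n:ℝ)+1) *
        ∫ t in ((k:ℝ)/((n:ℝ)+1))..(((k:ℝ)+1)/((n:ℝ)+1)), E t)|
      ≤ ε * ((3*((n:ℝ)*a*(1-a) + ((n:ℝ)*a - ((n:ℝ)+1)*x)^2)
            + 3*((n:ℝ)*a - ((n:ℝ)+1)*x) + 1)/(3*((n:ℝ)+1)^2))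
        + K * (8*(8*(n:ℝ)^2 + 8*((n:ℝ)*a - ((n:ℝ)+1)*x)^4 + 1)/(((n:ℝ)+1)^4)) := by
  have hn1 : (0:ℝ) < (n:ℝ)+1 := by positivity
  have key : ∀ k ∈ Finset.range (n+1),
      |bern n k a * (((n:ℝ)+1) * ∫ t in ((k:ℝ)/((n:ℝ)+1))..(((k:ℝ)+1)/((n:ℝ)+1)), E t)|
      ≤ (ε/(3*((n:ℝ)+1)^2)) * (bern n k a * (3*((k:ℝ) - ((n:ℝ)+1)*x)^2
          + 3*((k:ℝ) - ((n:ℝ)+1)*x) + 1))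
        + ((8*K/(((n:ℝ)+1)^4)) * (bern n k a * ((k:ℝ) - ((n:ℝ)+1)*x)^4)
            + (8*K/(((n:ℝ)+1)^4)) * bern n k a) := by
    intro k hk
    have hb := bern_nonneg (n := n) (k := k) h0 h1
    set u : ℝ := (k:ℝ) - ((n:ℝ)+1)*x with hu
    set c : ℝ := (k:ℝ)/((n:ℝ)+1) with hc
    set d : ℝ := ((k:ℝ)+1)/((n:ℝ)+1) with hd
    have hcd : c ≤ d := by rw [hc, hd]; gcongr; linarith
    have hdc : d - c = 1/((n:ℝ)+1) := by rw [hc, hd]; field_simp; ring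
    have hd1 : d - x = (u + 1)/((n:ℝ)+1) := by rw [hd, hu]; field_simp; ring
    have hc1 : c - x = u/((n:ℝ)+1) := by rw [hc, hu]; field_simp
    have hsub := interval_subset hk
    have hiE : IntervalIntegrable E volume c d := (hEc.mono hsub).intervalIntegrable
    have hi2 : IntervalIntegrable (fun t => (t-x)^2) volume c d := by
      apply Continuous.intervalIntegrable; continuity
    have hi4 : IntervalIntegrable (fun t => (t-x)^4) volume c d := by
      apply Continuous.intervalIntegrable; continuity
    have hib : IntervalIntegrable (fun t => ε*(t-x)^2 + K*(t-x)^4) volume c d :=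
      (hi2.const_mul ε).add (hi4.const_mul K)
    have hIccsub : Icc c d ⊆ Icc (0:ℝ) 1 := by
      rw [← Set.uIcc_of_le hcd]; exact hsub
    have step1 : |∫ t in c..d, E t| ≤ ∫ t in c..d, (ε*(t-x)^2 + K*(t-x)^4) := by
      refine (intervalIntegral.abs_integral_le_integral_abs hcd).trans ?_
      apply intervalIntegral.integral_mono_on hcd hiE.abs hib
      intro t ht
      exact hEb t (hIccsub ht)
    have hsplit : ∫ t in c..d, (ε*(t-x)^2 + K*(t-x)^4)
        = ε * (∫ t in c..d, (t-x)^2) + K * (∫ t in c..d, (t-x)^4) := by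
      rw [intervalIntegral.integral_add (hi2.const_mul ε) (hi4.const_mul K),
        intervalIntegral.integral_const_mul, intervalIntegral.integral_const_mul]
    have hval2 : (∫ t in c..d, (t-x)^2) = ((d-x)^(2+1) - (c-x)^(2+1))/((2:ℝ)+1) := by
      have := integral_sub_pow c d x 2
      rw [this]; norm_num
    have hub4 : (∫ t in c..d, (t-x)^4) ≤ (d - c) * (8*(u^4+1)/(((n:ℝ)+1)^4)) := by
      have hpt : ∀ t ∈ Icc c d, (t-x)^4 ≤ 8*(u^4+1)/(((n:ℝ)+1)^4) := by
        intro t ht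
        obtain ⟨ht1, ht2⟩ := ht
        have habs : |t - x| ≤ (|u|+1)/((n:ℝ)+1) := by
          rw [abs_le]
          constructor
          · have hl : u/((n:ℝ)+1) ≤ t - x := by rw [← hc1]; linarith
            have : -((|u|+1)/((n:ℝ)+1)) ≤ u/((n:ℝ)+1) := by
              rw [← neg_div]
              gcongr
              nlinarith [neg_abs_le u]
            linarith
          · have hr : t - x ≤ (u+1)/((n:ℝ)+1) := by rw [← hd1]; linarith
            have : (u+1)/((n:ℝ)+1) ≤ (|u|+1)/((n:ℝ)+1) := by
              gcongr
              exact le_abs_self u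
            linarith
        have h4 : (t-x)^4 ≤ ((|u|+1)/((n:ℝ)+1))^4 := by
          calc (t-x)^4 = |t-x|^4 := by
                rw [← abs_pow, abs_of_nonneg (by positivity : (0:ℝ) ≤ (t-x)^4)]
            _ ≤ ((|u|+1)/((n:ℝ)+1))^4 := pow_le_pow_left₀ (abs_nonneg _) habs 4
        refine h4.trans ?_
        rw [div_pow]
        have hq : (|u|+1)^4 ≤ 8*(u^4+1) := by
          have := quart_bound (abs_nonneg u)
          have habs4 : |u|^4 = u^4 := by
            rw [← abs_pow, abs_of_nonneg (by positivity : (0:ℝ) ≤ u^4)]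
          linarith [habs4 ▸ this]
        gcongr
      calc (∫ t in c..d, (t-x)^4)
          ≤ ∫ _ in c..d, (8*(u^4+1)/(((n:ℝ)+1)^4)) :=
            intervalIntegral.integral_mono_on hcd hi4 intervalIntegrable_const hpt
        _ = (d - c) * (8*(u^4+1)/(((n:ℝ)+1)^4)) := by
            rw [intervalIntegral.integral_const, smul_eq_mul]
    have hA : ((n:ℝ)+1) * (ε * (∫ t in c..d, (t-x)^2))
        = (ε/(3*((n:ℝ)+1)^2)) * (3*u^2 + 3*u + 1) := by
      rw [hval2, hd1, hc1]
      have := hn1.ne'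
      rw [div_pow, div_pow]
      field_simp
      ring
    have hB : ((n:ℝ)+1) * (K * (∫ t in c..d, (t-x)^4))
        ≤ (8*K/(((n:ℝ)+1)^4)) * (u^4 + 1) := by
      have h1 : ((n:ℝ)+1) * (K * (∫ t in c..d, (t-x)^4))
          ≤ ((n:ℝ)+1) * (K * ((d - c) * (8*(u^4+1)/(((n:ℝ)+1)^4)))) := by
        gcongr
      refine h1.trans (le_of_eq ?_)
      rw [hdc]
      field_simp
      try ring
    calc |bern n k a * (((n:ℝ)+1) * ∫ t in c..d, E t)|
        = bern n k a * (((n:ℝ)+1) * |∫ t in c..d, E t|) := by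
          rw [abs_mul, abs_mul, abs_of_nonneg hb, abs_of_nonneg hn1.le]
      _ ≤ bern n k a * (((n:ℝ)+1) * (∫ t in c..d, (ε*(t-x)^2 + K*(t-x)^4))) := by
          gcongr
      _ = bern n k a * (((n:ℝ)+1) * (ε * (∫ t in c..d, (t-x)^2))
            + ((n:ℝ)+1) * (K * (∫ t in c..d, (t-x)^4))) := by
          rw [hsplit]; ring
      _ ≤ bern n k a * ((ε/(3*((n:ℝ)+1)^2)) * (3*u^2 + 3*u + 1)
            + (8*K/(((n:ℝ)+1)^4)) * (u^4 + 1)) := by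
          apply mul_le_mul_of_nonneg_left _ hb
          rw [hA]
          linarith [hB]
      _ = (ε/(3*((n:ℝ)+1)^2)) * (bern n k a * (3*u^2 + 3*u + 1))
            + ((8*K/(((n:ℝ)+1)^4)) * (bern n k a * u^4)
              + (8*K/(((n:ℝ)+1)^4)) * bern n k a) := by ring
  calc |∑ k ∈ Finset.range (n+1), bern n k a * (((n:ℝ)+1) *
        ∫ t in ((k:ℝ)/((n:ℝ)+1))..(((k:ℝ)+1)/((n:ℝ)+1)), E t)|
      ≤ ∑ k ∈ Finset.range (n+1), |bern n k a * (((n:ℝ)+1) *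
        ∫ t in ((k:ℝ)/((n:ℝ)+1))..(((k:ℝ)+1)/((n:ℝ)+1)), E t)| :=
        Finset.abs_sum_le_sum_abs _ _
    _ ≤ ∑ k ∈ Finset.range (n+1), ((ε/(3*((n:ℝ)+1)^2)) * (bern n k a * (3*((k:ℝ) - ((n:ℝ)+1)*x)^2
          + 3*((k:ℝ) - ((n:ℝ)+1)*x) + 1))
        + ((8*K/(((n:ℝ)+1)^4)) * (bern n k a * ((k:ℝ) - ((n:ℝ)+1)*x)^4)
            + (8*K/(((n:ℝ)+1)^4)) * bern n k a)) := Finset.sum_le_sum key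
    _ = (ε/(3*((n:ℝ)+1)^2)) * (∑ k ∈ Finset.range (n+1), bern n k a * (3*((k:ℝ) - ((n:ℝ)+1)*x)^2
          + 3*((k:ℝ) - ((n:ℝ)+1)*x) + 1))
        + ((8*K/(((n:ℝ)+1)^4)) * (∑ k ∈ Finset.range (n+1), bern n k a * ((k:ℝ) - ((n:ℝ)+1)*x)^4)
            + (8*K/(((n:ℝ)+1)^4)) * (∑ k ∈ Finset.range (n+1), bern n k a)) := by
        rw [Finset.sum_add_distrib, Finset.sum_add_distrib, ← Finset.mul_sum, ← Finset.mul_sum,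
          ← Finset.mul_sum]
    _ ≤ ε * ((3*((n:ℝ)*a*(1-a) + ((n:ℝ)*a - ((n:ℝ)+1)*x)^2)
            + 3*((n:ℝ)*a - ((n:ℝ)+1)*x) + 1)/(3*((n:ℝ)+1)^2))
        + K * (8*(8*(n:ℝ)^2 + 8*((n:ℝ)*a - ((n:ℝ)+1)*x)^4 + 1)/(((n:ℝ)+1)^4)) := by
        rw [sum_bern_quad, sum_bern]
        have hq := sum_bern_quart_le n a (((n:ℝ)+1)*x) h0 h1
        have hc8 : (0:ℝ) ≤ 8*K/(((n:ℝ)+1)^4) := by positivity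
        have h2 : (8*K/(((n:ℝ)+1)^4)) * (∑ k ∈ Finset.range (n+1),
              bern n k a * ((k:ℝ) - ((n:ℝ)+1)*x)^4)
            ≤ (8*K/(((n:ℝ)+1)^4)) * (8*(n:ℝ)^2 + 8*((n:ℝ)*a - ((n:ℝ)+1)*x)^4) :=
          mul_le_mul_of_nonneg_left hq hc8
        have he1 : (ε/(3*((n:ℝ)+1)^2)) * (3*((n:ℝ)*a*(1-a) + ((n:ℝ)*a - ((n:ℝ)+1)*x)^2)
            + 3*((n:ℝ)*a - ((n:ℝ)+1)*x) + 1)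
            = ε * ((3*((n:ℝ)*a*(1-a) + ((n:ℝ)*a - ((n:ℝ)+1)*x)^2)
            + 3*((n:ℝ)*a - ((n:ℝ)+1)*x) + 1)/(3*((n:ℝ)+1)^2)) := by ring
        have he2 : (8*K/(((n:ℝ)+1)^4)) * (8*(n:ℝ)^2 + 8*((n:ℝ)*a - ((n:ℝ)+1)*x)^4)
            + (8*K/(((n:ℝ)+1)^4)) * 1
            = K * (8*(8*(n:ℝ)^2 + 8*((n:ℝ)*a - ((n:ℝ)+1)*x)^4 + 1)/(((n:ℝ)+1)^4)) := by
          field_simp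
        linarith [h2]

set_option maxHeartbeats 1000000 in
lemma key_tendsto (μ x : ℝ) (hμ : 0 < μ) (hx : x ∈ Icc (0:ℝ) 1) (g : ℝ → ℝ)
    (hg : ContDiffOn ℝ 2 g (Icc (0:ℝ) 1)) :
    Tendsto (fun n : ℕ => (n:ℝ) * ((∑ k ∈ Finset.range (n+1),
        bern n k (aFun μ n x) * ((n:ℝ)+1) *
          ∫ t in ((k:ℝ)/((n:ℝ)+1))..(((k:ℝ)+1)/((n:ℝ)+1)), g t) - g x)) atTop
      (nhds (derivWithin g (Icc 0 1) x * (1/2 + (x - x^2)/(2*(1+μ)) - x)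
        + derivWithin (derivWithin g (Icc 0 1)) (Icc 0 1) x * ((x - x^2)/2))) := by
  obtain ⟨hx0, hx1⟩ := hx
  set b1 := derivWithin g (Icc (0:ℝ) 1) x with hb1
  set b2 := derivWithin (derivWithin g (Icc (0:ℝ) 1)) (Icc (0:ℝ) 1) x with hb2
  set L : ℝ := (x - x^2)/(2*(1+μ)) with hL
  set a : ℕ → ℝ := fun n => aFun μ n x with ha
  have hamem : ∀ n, a n ∈ Icc (0:ℝ) 1 := fun n => aFun_mem hμ ⟨hx0, hx1⟩ n
  set c : ℕ → ℝ := fun n => (n:ℝ) * a n - ((n:ℝ)+1)*x with hcdef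
  set E : ℝ → ℝ := fun t => g t - g x - b1 * (t - x) - b2/2 * (t - x)^2 with hEdef
  have hEc : ContinuousOn E (Icc (0:ℝ) 1) := by
    have h1 := hg.continuousOn
    simp only [hEdef]
    fun_prop
  have hgc := hg.continuousOn
  have hdecomp : ∀ n : ℕ, (∑ k ∈ Finset.range (n+1),
      bern n k (a n) * ((n:ℝ)+1) *
        ∫ t in ((k:ℝ)/((n:ℝ)+1))..(((k:ℝ)+1)/((n:ℝ)+1)), g t)
      = g x + b1 * ((2*(c n) + 1)/(2*((n:ℝ)+1)))
        + b2/2 * ((3*((n:ℝ)*(a n)*(1-a n) + (c n)^2) + 3*(c n) + 1)/(3*((n:ℝ)+1)^2))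
        + ∑ k ∈ Finset.range (n+1), bern n k (a n) * (((n:ℝ)+1) *
            ∫ t in ((k:ℝ)/((n:ℝ)+1))..(((k:ℝ)+1)/((n:ℝ)+1)), E t) := by
    intro n
    exact decomp n (a n) x b1 b2 g E hgc hEc (fun t => by rw [hEdef])
  -- limits
  have hLlim : Tendsto (fun n : ℕ => (n:ℝ) * (a n - x)) atTop (nhds L) :=
    tendsto_n_aFun_sub μ x hμ ⟨hx0, hx1⟩
  have hclim : Tendsto c atTop (nhds (L - x)) := by
    have := hLlim.sub_const x
    refine this.congr fun n => ?_
    simp only [hcdef]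
    ring
  have halim : Tendsto a atTop (nhds x) := by
    have h1 : Tendsto (fun n : ℕ => ((n:ℝ) * (a n - x)) / (n:ℝ) + x) atTop (nhds (0 + x)) :=
      (hLlim.div_atTop tendsto_natCast_atTop_atTop).add_const x
    rw [zero_add] at h1
    apply h1.congr'
    filter_upwards [eventually_ge_atTop 1] with n hn
    have hn0 : (n:ℝ) ≠ 0 := by positivity
    field_simp
    ring
  have hratio : Tendsto (fun n : ℕ => (n:ℝ)/((n:ℝ)+1)) atTop (nhds 1) :=
    tendsto_natCast_div_add_atTop 1
  have hinv : Tendsto (fun n : ℕ => 1/((n:ℝ)+1)) atTop (nhds 0) :=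
    tendsto_one_div_add_atTop_nhds_zero_nat
  -- T1
  have T1 : Tendsto (fun n : ℕ => (n:ℝ) * ((2*(c n) + 1)/(2*((n:ℝ)+1)))) atTop
      (nhds (L - x + 1/2)) := by
    have h1 : Tendsto (fun n : ℕ => ((n:ℝ)/((n:ℝ)+1)) * ((2*(c n) + 1)/2)) atTop
        (nhds (1 * ((2*(L - x) + 1)/2))) :=
      hratio.mul (((hclim.const_mul 2).add_const 1).div_const 2)
    have he : 1 * ((2*(L - x) + 1)/2) = L - x + 1/2 := by ring
    rw [he] at h1
    refine h1.congr fun n => ?_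
    have : ((n:ℝ)+1) ≠ 0 := by positivity
    field_simp
    try ring
    try exact Or.inl trivial
  -- T2
  have T2 : Tendsto (fun n : ℕ => (n:ℝ) *
      ((3*((n:ℝ)*(a n)*(1-a n) + (c n)^2) + 3*(c n) + 1)/(3*((n:ℝ)+1)^2))) atTop
      (nhds (x*(1-x))) := by
    have h1 : Tendsto (fun n : ℕ => ((n:ℝ)/((n:ℝ)+1)) * ((n:ℝ)/((n:ℝ)+1)) * (a n * (1 - a n))
        + ((n:ℝ)/((n:ℝ)+1)) * (1/((n:ℝ)+1)) * ((3*(c n)^2 + 3*(c n) + 1)/3)) atTop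
        (nhds (1 * 1 * (x * (1 - x)) + 1 * 0 * ((3*(L-x)^2 + 3*(L-x) + 1)/3))) := by
      apply Tendsto.add
      · exact (hratio.mul hratio).mul (halim.mul ((tendsto_const_nhds).sub halim))
      · have hB : Tendsto (fun n : ℕ => (3*(c n)^2 + 3*(c n) + 1)/3) atTop
            (nhds ((3*(L-x)^2 + 3*(L-x) + 1)/3)) :=
          (((hclim.pow 2).const_mul 3).add (hclim.const_mul 3)).add_const 1 |>.div_const 3
        exact (hratio.mul hinv).mul hB
    have he : 1 * 1 * (x * (1 - x)) + 1 * 0 * ((3*(L-x)^2 + 3*(L-x) + 1)/3) = x*(1-x) := by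
      ring
    rw [he] at h1
    refine h1.congr fun n => ?_
    have : ((n:ℝ)+1) ≠ 0 := by positivity
    field_simp
    try ring
    try exact Or.inl trivial
  -- TQ
  have TQ : Tendsto (fun n : ℕ => (n:ℝ) *
      (8*(8*(n:ℝ)^2 + 8*(c n)^4 + 1)/(((n:ℝ)+1)^4))) atTop (nhds 0) := by
    have h1 : Tendsto (fun n : ℕ =>
        64 * (((n:ℝ)/((n:ℝ)+1)) * ((n:ℝ)/((n:ℝ)+1)) * ((n:ℝ)/((n:ℝ)+1)) * (1/((n:ℝ)+1)))
        + (8*(c n)^4 + 1) * (8 * (((n:ℝ)/((n:ℝ)+1)) * (1/((n:ℝ)+1)) * (1/((n:ℝ)+1)) * (1/((n:ℝ)+1))))) atTop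
        (nhds (64 * (1 * 1 * 1 * 0) + (8*(L-x)^4 + 1) * (8 * (1 * 0 * 0 * 0)))) := by
      apply Tendsto.add
      · exact (((hratio.mul hratio).mul hratio).mul hinv).const_mul 64
      · exact (((hclim.pow 4).const_mul 8).add_const 1).mul
          ((((hratio.mul hinv).mul hinv).mul hinv).const_mul 8)
    have he : 64 * (1 * 1 * 1 * (0:ℝ)) + (8*(L-x)^4 + 1) * (8 * (1 * 0 * 0 * 0)) = 0 := by ring
    rw [he] at h1
    refine h1.congr fun n => ?_
    have : ((n:ℝ)+1) ≠ 0 := by positivity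
    field_simp
    try ring
    try exact Or.inl trivial
  -- T3
  have T3 : Tendsto (fun n : ℕ => (n:ℝ) * ∑ k ∈ Finset.range (n+1),
      bern n k (a n) * (((n:ℝ)+1) *
        ∫ t in ((k:ℝ)/((n:ℝ)+1))..(((k:ℝ)+1)/((n:ℝ)+1)), E t)) atTop (nhds 0) := by
    rw [Metric.tendsto_atTop]
    intro ε' hε'
    have hε4 : (0:ℝ) < ε'/4 := by linarith
    obtain ⟨δ, hδ, hδb⟩ := taylor_bound hg ⟨hx0, hx1⟩ hε4
    obtain ⟨C, hC0, hCb⟩ := taylor_global hg ⟨hx0, hx1⟩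
    set K : ℝ := C/δ^4 with hK
    have hK0 : 0 ≤ K := by positivity
    have hEb : ∀ t ∈ Icc (0:ℝ) 1, |E t| ≤ (ε'/4)*(t-x)^2 + K*(t-x)^4 := by
      intro t ht
      rcases le_or_gt (|t - x|) δ with hcase | hcase
      · have hb := hδb t ht hcase
        have h4 : 0 ≤ K*(t-x)^4 := by positivity
        rw [← hb1, ← hb2] at hb
        show |g t - g x - b1 * (t - x) - b2/2 * (t - x)^2| ≤ (ε'/4)*(t-x)^2 + K*(t-x)^4
        linarith [hb]
      · have h2 : 0 ≤ (ε'/4)*(t-x)^2 := by positivity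
        have hd4 : δ^4 ≤ (t-x)^4 := by
          calc δ^4 ≤ |t-x|^4 := pow_le_pow_left₀ hδ.le hcase.le 4
            _ = (t-x)^4 := by rw [← abs_pow, abs_of_nonneg (by positivity : (0:ℝ) ≤ (t-x)^4)]
        have h3 : C ≤ K*(t-x)^4 := by
          rw [hK, div_mul_eq_mul_div, le_div_iff₀ (by positivity)]
          nlinarith [mul_le_mul_of_nonneg_left hd4 hC0]
        have hb := hCb t ht
        rw [← hb1, ← hb2] at hb
        show |g t - g x - b1 * (t - x) - b2/2 * (t - x)^2| ≤ (ε'/4)*(t-x)^2 + K*(t-x)^4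
        linarith [hb]
    have hRb : ∀ n : ℕ, |(∑ k ∈ Finset.range (n+1), bern n k (a n) * (((n:ℝ)+1) *
        ∫ t in ((k:ℝ)/((n:ℝ)+1))..(((k:ℝ)+1)/((n:ℝ)+1)), E t))|
        ≤ (ε'/4) * ((3*((n:ℝ)*(a n)*(1-(a n)) + (c n)^2) + 3*(c n) + 1)/(3*((n:ℝ)+1)^2))
          + K * (8*(8*(n:ℝ)^2 + 8*(c n)^4 + 1)/(((n:ℝ)+1)^4)) := by
      intro n
      have := R_bound n (a n) x (ε'/4) K (hamem n).1 (hamem n).2 hε4.le hK0 E hEc hEb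
      simpa only [← hcdef] using this
    -- eventual bounds
    have hev1 : ∀ᶠ n : ℕ in atTop, (n:ℝ) *
        ((3*((n:ℝ)*(a n)*(1-(a n)) + (c n)^2) + 3*(c n) + 1)/(3*((n:ℝ)+1)^2)) < 1 :=
      Filter.Tendsto.eventually_lt_const (by nlinarith : x*(1-x) < 1) T2
    have hev2 : ∀ᶠ n : ℕ in atTop, K * ((n:ℝ) *
        (8*(8*(n:ℝ)^2 + 8*(c n)^4 + 1)/(((n:ℝ)+1)^4))) < ε'/2 := by
      have := TQ.const_mul K
      rw [mul_zero] at this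
      exact Filter.Tendsto.eventually_lt_const (by linarith) this
    obtain ⟨N, hN⟩ := Filter.eventually_atTop.mp (hev1.and hev2)
    refine ⟨N, fun n hn => ?_⟩
    obtain ⟨h1, h2⟩ := hN n hn
    rw [Real.dist_eq, sub_zero]
    have hmul : |(n:ℝ) * ∑ k ∈ Finset.range (n+1), bern n k (a n) * (((n:ℝ)+1) *
        ∫ t in ((k:ℝ)/((n:ℝ)+1))..(((k:ℝ)+1)/((n:ℝ)+1)), E t)|
        = (n:ℝ) * |∑ k ∈ Finset.range (n+1), bern n k (a n) * (((n:ℝ)+1) *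
        ∫ t in ((k:ℝ)/((n:ℝ)+1))..(((k:ℝ)+1)/((n:ℝ)+1)), E t)| := by
      rw [abs_mul, Nat.abs_cast]
    rw [hmul]
    have hn0 : (0:ℝ) ≤ (n:ℝ) := Nat.cast_nonneg n
    calc (n:ℝ) * |∑ k ∈ Finset.range (n+1), bern n k (a n) * (((n:ℝ)+1) *
        ∫ t in ((k:ℝ)/((n:ℝ)+1))..(((k:ℝ)+1)/((n:ℝ)+1)), E t)|
        ≤ (n:ℝ) * ((ε'/4) * ((3*((n:ℝ)*(a n)*(1-(a n)) + (c n)^2) + 3*(c n) + 1)/(3*((n:ℝ)+1)^2))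
          + K * (8*(8*(n:ℝ)^2 + 8*(c n)^4 + 1)/(((n:ℝ)+1)^4))) :=
          mul_le_mul_of_nonneg_left (hRb n) hn0
      _ = (ε'/4) * ((n:ℝ) * ((3*((n:ℝ)*(a n)*(1-(a n)) + (c n)^2) + 3*(c n) + 1)/(3*((n:ℝ)+1)^2)))
          + K * ((n:ℝ) * (8*(8*(n:ℝ)^2 + 8*(c n)^4 + 1)/(((n:ℝ)+1)^4))) := by ring
      _ < (ε'/4) * 1 + ε'/2 := by
          have hq : (0:ℝ) ≤ ε'/4 := hε4.le
          have := mul_le_mul_of_nonneg_left h1.le hq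
          linarith
      _ < ε' := by linarith
  -- combine
  have hfinal : Tendsto (fun n : ℕ => b1 * ((n:ℝ) * ((2*(c n) + 1)/(2*((n:ℝ)+1))))
      + (b2/2) * ((n:ℝ) * ((3*((n:ℝ)*(a n)*(1-a n) + (c n)^2) + 3*(c n) + 1)/(3*((n:ℝ)+1)^2)))
      + (n:ℝ) * ∑ k ∈ Finset.range (n+1), bern n k (a n) * (((n:ℝ)+1) *
          ∫ t in ((k:ℝ)/((n:ℝ)+1))..(((k:ℝ)+1)/((n:ℝ)+1)), E t)) atTop
      (nhds (b1 * (L - x + 1/2) + (b2/2) * (x*(1-x)) + 0)) :=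
    ((T1.const_mul b1).add (T2.const_mul (b2/2))).add T3
  have hval : b1 * (L - x + 1/2) + (b2/2) * (x*(1-x)) + 0
      = b1 * (1/2 + L - x) + b2 * ((x - x^2)/2) := by ring
  rw [hval] at hfinal
  have hgoalval : b1 * (1/2 + L - x) = b1 * (1/2 + (x-x^2)/(2*(1+μ)) - x) := by rw [hL]
  rw [hgoalval] at hfinal
  refine hfinal.congr fun n => ?_
  show _ = (n:ℝ) * ((∑ k ∈ Finset.range (n+1),
      bern n k (a n) * ((n:ℝ)+1) *
        ∫ t in ((k:ℝ)/((n:ℝ)+1))..(((k:ℝ)+1)/((n:ℝ)+1)), g t) - g x)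
  rw [hdecomp n]
  ring


theorem stmt11 (μ : ℝ) (hμ : 0 < μ) (f : ℝ → ℝ)
    (hf : ContDiffOn ℝ 2 f (Set.Icc 0 1)) (x : ℝ) (hx : x ∈ Set.Icc (0:ℝ) 1) :
    Tendsto (fun n : ℕ => (n : ℝ) * (LK μ n f x - f x)) atTop
      (nhds (lnMu μ x *
        (derivWithin (fun t => f t / lnMu μ t) (Set.Icc 0 1) x *
            (1 / 2 + (x - x ^ 2) / (2 * (1 + μ)) - x) +
          derivWithin (derivWithin (fun t => f t / lnMu μ t) (Set.Icc 0 1))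
              (Set.Icc 0 1) x *
            ((x - x ^ 2) / 2)))) := by
  have hlnpos : ∀ t ∈ Icc (0:ℝ) 1, 0 < lnMu μ t := by
    intro t ht
    have := ht.1
    exact Real.log_pos (by linarith)
  have hlnne : ∀ t ∈ Icc (0:ℝ) 1, lnMu μ t ≠ 0 := fun t ht => (hlnpos t ht).ne'
  set g : ℝ → ℝ := fun t => f t / lnMu μ t with hgdef
  have hln : ContDiffOn ℝ 2 (fun t : ℝ => lnMu μ t) (Icc (0:ℝ) 1) := by
    show ContDiffOn ℝ 2 (fun t : ℝ => Real.log (1 + μ + t)) (Icc (0:ℝ) 1)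
    apply ContDiffOn.log
    · exact (contDiff_const.add contDiff_id).contDiffOn
    · intro t ht
      have := ht.1
      nlinarith
  have hgsm : ContDiffOn ℝ 2 g (Icc (0:ℝ) 1) := hf.div hln hlnne
  have hkey := key_tendsto μ x hμ hx g hgsm
  have final := hkey.const_mul (lnMu μ x)
  refine final.congr fun n => ?_
  have hLK : LK μ n f x = lnMu μ x * ∑ k ∈ Finset.range (n+1),
      bern n k (aFun μ n x) * ((n:ℝ)+1) *
        ∫ t in ((k:ℝ)/((n:ℝ)+1))..(((k:ℝ)+1)/((n:ℝ)+1)), g t := rfl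
  have hfx : f x = lnMu μ x * g x := by
    have h0 : lnMu μ x ≠ 0 := hlnne x hx
    rw [hgdef]
    field_simp
  rw [hLK, hfx]
  ring
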